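/- Let η be geometric with P(η = m) = λ^m/(1+λ)^{m+1} where λ = λ₁ + ⋯ + λᵣ with each λᵢ ≥ 0, and conditionally on η = N let (η₁,...,ηᵣ) be Multinomial(N; λ₁/λ,...,λᵣ/λ). Equivalently, let E be exponential with mean 1 and conditionally on E let η₁,...,ηᵣ be independent Poisson(λᵢE). Then these two constructions give the same joint distribution of (η₁,...,ηᵣ). -/

import Mathlib

open MeasureTheory Real

lemma aux_int (a : ℝ) (ha : 0 < a) (n : ℕ) :
    ∫ t in Set.Ioi (0 : ℝ), t ^ n * Real.exp (-(a * t)) = n.factorial / a ^ (n + 1) := by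
  have h := Real.integral_rpow_mul_exp_neg_mul_Ioi (a := (n : ℝ) + 1) (r := a)
    (by positivity) ha
  have heq : ∀ t ∈ Set.Ioi (0 : ℝ),
      t ^ ((n : ℝ) + 1 - 1) * Real.exp (-(a * t)) = t ^ n * Real.exp (-(a * t)) := by
    intro t ht
    rw [add_sub_cancel_right, Real.rpow_natCast]
  rw [setIntegral_congr_fun measurableSet_Ioi heq] at h
  rw [h, Real.Gamma_nat_eq_factorial,
    show ((n : ℝ) + 1) = ((n + 1 : ℕ) : ℝ) by push_cast; ring, Real.rpow_natCast,
    div_pow, one_pow, one_div, inv_mul_eq_div]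

/-- Multinomially splitting a geometric(mean λ) count into cells with
probabilities `λᵢ/λ` gives the same joint law as independent Poisson(λᵢE)
variables with a common exponential mixing variable `E`: for every outcome
`(m₁,…,mᵣ)` the two probabilities agree. -/
theorem geometric_multinomial_eq_mixed_poisson (r : ℕ) (lam : Fin r → ℝ)
    (hlam : ∀ i, 0 ≤ lam i) (hpos : 0 < ∑ i, lam i) (m : Fin r → ℕ) :
    (∑ i, lam i) ^ (∑ i, m i) / (1 + ∑ i, lam i) ^ ((∑ i, m i) + 1) *
        ((∑ i, m i).factorial / ∏ i, ((m i).factorial : ℝ)) *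
        ∏ i, (lam i / ∑ i, lam i) ^ (m i) =
      ∫ t in Set.Ioi (0 : ℝ),
        Real.exp (-t) *
          ∏ i, Real.exp (-(lam i * t)) * (lam i * t) ^ (m i) / (m i).factorial := by
  set L := ∑ i, lam i with hL
  set M := ∑ i, m i with hM
  have h1L : 0 < 1 + L := by linarith
  have hC : ∀ t ∈ Set.Ioi (0 : ℝ),
      Real.exp (-t) * ∏ i, Real.exp (-(lam i * t)) * (lam i * t) ^ (m i) / (m i).factorial
        = ((∏ i, lam i ^ (m i)) / ∏ i, ((m i).factorial : ℝ))
            * (t ^ M * Real.exp (-((1 + L) * t))) := by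
    intro t ht
    have hprod : ∏ i, Real.exp (-(lam i * t)) * (lam i * t) ^ (m i) / (m i).factorial
        = Real.exp (-(L * t)) * ((∏ i, lam i ^ (m i)) * t ^ M / ∏ i, ((m i).factorial : ℝ)) := by
      rw [Finset.prod_div_distrib, Finset.prod_mul_distrib, ← Real.exp_sum]
      simp_rw [mul_pow]
      rw [Finset.prod_mul_distrib, Finset.prod_pow_eq_pow_sum, ← hM]
      have : (∑ x : Fin r, -(lam x * t)) = -(L * t) := by
        rw [hL, Finset.sum_mul, ← Finset.sum_neg_distrib]
      rw [this]
      ring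
    have hexp : Real.exp (-t) * Real.exp (-(L * t)) = Real.exp (-((1 + L) * t)) := by
      rw [← Real.exp_add]; congr 1; ring
    rw [hprod, ← mul_assoc, hexp]
    ring
  rw [setIntegral_congr_fun measurableSet_Ioi hC, integral_const_mul, aux_int _ h1L]
  have hLn : L ≠ 0 := ne_of_gt hpos
  have hfac : (∏ i, ((m i).factorial : ℝ)) ≠ 0 :=
    Finset.prod_ne_zero_iff.2 fun i _ => Nat.cast_ne_zero.2 (Nat.factorial_ne_zero _)
  have hsplit : ∏ i, (lam i / L) ^ (m i) = (∏ i, lam i ^ (m i)) / L ^ M := by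
    simp_rw [div_pow]
    rw [Finset.prod_div_distrib, Finset.prod_pow_eq_pow_sum, ← hM]
  rw [hsplit]
  have h1Ln : (1 + L) ^ (M + 1) ≠ 0 := pow_ne_zero _ (ne_of_gt h1L)
  field_simp
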